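/- For g, h > 0, the Bernoulli function ψ_{B,g,h}(λ) := (1/(gh))·log((g e^{hλ} + h e^{−gλ})/(g+h)) satisfies ψ_{B,g,h}(λ) ≤ ((g+h)²/(4gh))·(λ²/2) for all λ ≥ 0 (Hoeffding's lemma in CGF form). -/

import Mathlib

lemma nonneg_of_deriv (f f' : ℝ → ℝ) (hf : ∀ x, HasDerivAt f (f' x) x)
    (h0 : f 0 = 0) (h' : ∀ x, 0 ≤ x → 0 ≤ f' x) {x : ℝ} (hx : 0 ≤ x) : 0 ≤ f x := by
  have hdiff : Differentiable ℝ f := fun x => (hf x).differentiableAt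
  have hm : MonotoneOn f (Set.Ici (0:ℝ)) := by
    apply monotoneOn_of_deriv_nonneg (convex_Ici 0) hdiff.continuous.continuousOn
      (hdiff.differentiableOn)
    intro y hy
    rw [interior_Ici] at hy
    rw [(hf y).deriv]
    exact h' y hy.le
  calc 0 = f 0 := h0.symm
    _ ≤ f x := hm (Set.mem_Ici.mpr le_rfl) hx hx

lemma key (p : ℝ) (hp0 : 0 < p) (hp1 : p < 1) (u : ℝ) (hu : 0 ≤ u) :
    Real.log (1 - p + p * Real.exp u) ≤ p * u + u ^ 2 / 8 := by
  set d : ℝ → ℝ := fun u => 1 - p + p * Real.exp u with hd_def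
  have hdpos : ∀ u, 0 < d u := fun u => by
    have := Real.exp_pos u
    simp only [hd_def]; nlinarith
  have hd : ∀ u, HasDerivAt d (p * Real.exp u) u := fun u =>
    ((Real.hasDerivAt_exp u).const_mul p).const_add (1 - p)
  -- first derivative of F
  set F1 : ℝ → ℝ := fun u => p + u / 4 - p * Real.exp u / d u with hF1_def
  -- derivative of q := p e^u / d
  have hq : ∀ u, HasDerivAt (fun u => p * Real.exp u / d u)
      ((p * Real.exp u * d u - p * Real.exp u * (p * Real.exp u)) / (d u) ^ 2) u := by
    intro u
    exact ((Real.hasDerivAt_exp u).const_mul p).div (hd u) (hdpos u).ne'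
  have hF1deriv : ∀ u, HasDerivAt F1
      (1 / 4 - (p * Real.exp u * d u - p * Real.exp u * (p * Real.exp u)) / (d u) ^ 2) u := by
    intro u
    have h1 : HasDerivAt (fun u : ℝ => p + u / 4) (1 / 4) u := by
      simpa using ((hasDerivAt_id u).div_const 4).const_add p
    exact h1.sub (hq u)
  have hF1nonneg : ∀ u, 0 ≤ u → 0 ≤ F1 u := by
    intro u hu
    apply nonneg_of_deriv F1 _ hF1deriv _ _ hu
    · simp [hF1_def, hd_def]
    · intro y _
      have hdy := hdpos y
      have ha : 0 < p * Real.exp y := by positivity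
      have hba : d y - p * Real.exp y = 1 - p := by simp [hd_def]
      rw [sub_nonneg, div_le_iff₀ (by positivity)]
      nlinarith [sq_nonneg (d y - 2 * (p * Real.exp y))]
  -- now F
  set F : ℝ → ℝ := fun u => p * u + u ^ 2 / 8 - Real.log (d u) with hF_def
  have hFderiv : ∀ u, HasDerivAt F (F1 u) u := by
    intro u
    have h1 : HasDerivAt (fun u : ℝ => p * u + u ^ 2 / 8) (p + u / 4) u := by
      have := ((hasDerivAt_pow 2 u).div_const 8).const_add (p * u)
      have h2 : HasDerivAt (fun u : ℝ => p * u) p u := by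
        simpa using (hasDerivAt_id u).const_mul p
      have h3 : HasDerivAt (fun u : ℝ => u ^ 2 / 8) (u / 4) u := by
        have := (hasDerivAt_pow 2 u).div_const 8
        exact this.congr_deriv (by norm_num; ring)
      exact h2.add h3
    have h2 : HasDerivAt (fun u => Real.log (d u)) (p * Real.exp u / d u) u :=
      (hd u).log (hdpos u).ne'
    exact h1.sub h2
  have := nonneg_of_deriv F F1 hFderiv (by simp [hF_def, hd_def]) (fun y hy => hF1nonneg y hy) hu
  simp only [hF_def] at this
  linarith

/-- Hoeffding's lemma in CGF form: for `g, h > 0`, the Bernoulli function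
`ψ_{B,g,h} λ = (1/(gh)) log((g e^{hλ} + h e^{−gλ})/(g+h))` satisfies
`ψ_{B,g,h} λ ≤ ((g+h)²/(4gh)) · λ²/2` for all `λ ≥ 0`. -/
theorem bernoulli_le_hoeffding (g h l : ℝ) (hg : 0 < g) (hh : 0 < h) (hl : 0 ≤ l) :
    1 / (g * h) * Real.log ((g * Real.exp (h * l) + h * Real.exp (-(g * l))) / (g + h))
      ≤ (g + h) ^ 2 / (4 * g * h) * (l ^ 2 / 2) := by
  have hgh : 0 < g + h := by linarith
  set p := g / (g + h) with hp_def
  have hp0 : 0 < p := by positivity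
  have hp1 : p < 1 := by rw [hp_def, div_lt_one hgh]; linarith
  set u := (g + h) * l with hu_def
  have hu : 0 ≤ u := by positivity
  have hrw : (g * Real.exp (h * l) + h * Real.exp (-(g * l))) / (g + h)
      = Real.exp (-(g * l)) * (1 - p + p * Real.exp u) := by
    have h1 : Real.exp (h * l) = Real.exp (-(g * l)) * Real.exp u := by
      rw [← Real.exp_add, hu_def]; ring_nf
    rw [h1, hp_def]
    field_simp
    ring
  have hdpos : 0 < 1 - p + p * Real.exp u := by nlinarith [Real.exp_pos u]
  have hlog : Real.log ((g * Real.exp (h * l) + h * Real.exp (-(g * l))) / (g + h))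
      = -(g * l) + Real.log (1 - p + p * Real.exp u) := by
    rw [hrw, Real.log_mul (Real.exp_pos _).ne' hdpos.ne', Real.log_exp]
  have hkey := key p hp0 hp1 u hu
  have hpu : p * u = g * l := by rw [hp_def, hu_def]; field_simp
  have hbound : Real.log ((g * Real.exp (h * l) + h * Real.exp (-(g * l))) / (g + h))
      ≤ (g + h) ^ 2 * l ^ 2 / 8 := by
    rw [hlog]
    have : u ^ 2 = (g + h) ^ 2 * l ^ 2 := by rw [hu_def]; ring
    nlinarith
  have hghpos : 0 < g * h := by positivity
  have step : 1 / (g * h) * Real.log ((g * Real.exp (h * l) + h * Real.exp (-(g * l))) / (g + h))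
      ≤ 1 / (g * h) * ((g + h) ^ 2 * l ^ 2 / 8) :=
    mul_le_mul_of_nonneg_left hbound (by positivity)
  refine step.trans (le_of_eq ?_)
  rw [one_div, inv_mul_eq_div, div_eq_iff hghpos.ne']
  field_simp
  ring
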